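/- Let a > 0 and b = min(1, a/2). Let r : [0, τ) → (0, ∞) be differentiable and β > 0 with ṙ(t) ≤ −b·r(t)^{−a} + 8·β^{−a} on an interval [t₀, t₁] ⊆ [0, τ), and suppose r(t₀)^a < b·β^a/16. Then ṙ(t) ≤ −b/(2 r(t)^a) for all t ∈ [t₀, t₁] such that r ≤ r(t₀) on [t₀, t], and in fact r is strictly decreasing on [t₀, t₁] while it stays positive, with r(t)^{a+1} ≤ r(t₀)^{a+1} − (b/2)(a+1)(t − t₀). -/

import Mathlib

open Set

theorem stmt15 (a b β τ t₀ t₁ : ℝ) (ha : 0 < a) (hb : b = min 1 (a/2)) (hβ : 0 < β)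
    (r : ℝ → ℝ)
    (hsub : Set.Icc t₀ t₁ ⊆ Set.Ico 0 τ) (ht : t₀ ≤ t₁)
    (hpos : ∀ t ∈ Set.Ico (0:ℝ) τ, 0 < r t)
    (hdiff : ∀ t ∈ Set.Ico (0:ℝ) τ, DifferentiableAt ℝ r t)
    (hd : ∀ t ∈ Set.Icc t₀ t₁, deriv r t ≤ -b * r t ^ (-a) + 8 * β ^ (-a))
    (hinit : r t₀ ^ a < b * β ^ a / 16) :
    (∀ t ∈ Set.Icc t₀ t₁, (∀ s ∈ Set.Icc t₀ t, r s ≤ r t₀) →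
      deriv r t ≤ -b / (2 * r t ^ a)) ∧
    StrictAntiOn r (Set.Icc t₀ t₁) ∧
    (∀ t ∈ Set.Icc t₀ t₁, r t ^ (a+1) ≤ r t₀ ^ (a+1) - (b/2)*(a+1)*(t - t₀)) := by
  have hb0 : 0 < b := by rw [hb]; positivity
  have hy : 0 < β ^ a := Real.rpow_pos_of_pos hβ a
  -- basic facts for points of [t₀,t₁]
  have hmem : ∀ t ∈ Icc t₀ t₁, t ∈ Ico (0:ℝ) τ := fun t htm => hsub htm
  have hrpos : ∀ t ∈ Icc t₀ t₁, 0 < r t := fun t htm => hpos t (hmem t htm)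
  have hrdiff : ∀ t ∈ Icc t₀ t₁, DifferentiableAt ℝ r t := fun t htm => hdiff t (hmem t htm)
  have hcont : ContinuousOn r (Icc t₀ t₁) := fun t htm =>
    ((hrdiff t htm).continuousAt).continuousWithinAt
  -- key algebraic estimate
  have key : ∀ x : ℝ, 0 < x → x < b * β ^ a / 16 →
      -b * x⁻¹ + 8 * (β ^ a)⁻¹ ≤ -b / (2 * x) := by
    intro x hx hxy
    have hdif : -b / (2 * x) - (-b * x⁻¹ + 8 * (β ^ a)⁻¹) = (b * β ^ a - 16 * x) / (2 * x * β ^ a) := by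
      field_simp
      ring
    have hnum : 0 ≤ b * β ^ a - 16 * x := by nlinarith
    have : 0 ≤ (b * β ^ a - 16 * x) / (2 * x * β ^ a) := by positivity
    linarith [hdif ▸ this]
  -- derivative bound at points where r t ≤ r t₀
  have derivle : ∀ t ∈ Icc t₀ t₁, r t ≤ r t₀ → deriv r t ≤ -b / (2 * r t ^ a) := by
    intro t htm hle
    have hrt := hrpos t htm
    have hxa : r t ^ a < b * β ^ a / 16 :=
      lt_of_le_of_lt (Real.rpow_le_rpow hrt.le hle ha.le) hinit
    have hxp : 0 < r t ^ a := Real.rpow_pos_of_pos hrt a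
    have h1 := hd t htm
    rw [Real.rpow_neg hrt.le, Real.rpow_neg hβ.le] at h1
    exact h1.trans (key _ hxp hxa)
  -- invariance: r t ≤ r t₀ on [t₀,t₁]
  have hinv : ∀ t ∈ Icc t₀ t₁, r t ≤ r t₀ := by
    intro t htm
    refine image_le_of_deriv_right_lt_deriv_boundary (f' := deriv r) hcont
      (fun x hx => ((hrdiff x (Ico_subset_Icc_self hx)).hasDerivAt).hasDerivWithinAt)
      le_rfl (B := fun _ => r t₀) (B' := fun _ => 0) (fun x => hasDerivAt_const x _) ?_ htm
    intro x hx heq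
    have hx' : x ∈ Icc t₀ t₁ := Ico_subset_Icc_self hx
    have := derivle x hx' (le_of_eq heq)
    have hxp : 0 < r x ^ a := Real.rpow_pos_of_pos (hrpos x hx') a
    have : deriv r x ≤ -b / (2 * r x ^ a) := this
    have hneg : -b / (2 * r x ^ a) < 0 := div_neg_of_neg_of_pos (by linarith) (by positivity)
    show deriv r x < 0
    linarith
  have derivneg : ∀ t ∈ Icc t₀ t₁, deriv r t ≤ -b / (2 * r t ^ a) :=
    fun t htm => derivle t htm (hinv t htm)
  refine ⟨fun t htm _ => derivneg t htm, ?_, ?_⟩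
  · -- strict antitone
    apply strictAntiOn_of_deriv_neg (convex_Icc t₀ t₁) hcont
    intro x hx
    rw [interior_Icc] at hx
    have hx' : x ∈ Icc t₀ t₁ := Ioo_subset_Icc_self hx
    have hxp : 0 < r x ^ a := Real.rpow_pos_of_pos (hrpos x hx') a
    have := derivneg x hx'
    have hneg : -b / (2 * r x ^ a) < 0 := div_neg_of_neg_of_pos (by linarith) (by positivity)
    linarith
  · -- integrated decay
    set g : ℝ → ℝ := fun t => r t ^ (a + 1) + b / 2 * (a + 1) * t with hg
    have hF : ∀ x ∈ Icc t₀ t₁, HasDerivAt (fun t => r t ^ (a + 1))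
        (deriv r x * (a + 1) * r x ^ (a + 1 - 1)) x := by
      intro x hx
      exact ((hrdiff x hx).hasDerivAt).rpow_const (Or.inl (hrpos x hx).ne')
    have hG : ∀ x ∈ Icc t₀ t₁, HasDerivAt g
        (deriv r x * (a + 1) * r x ^ (a + 1 - 1) + b / 2 * (a + 1)) x := by
      intro x hx
      simpa [hg, Pi.add_def] using (hF x hx).add ((hasDerivAt_id x).const_mul (b / 2 * (a + 1)))
    have hgcont : ContinuousOn g (Icc t₀ t₁) :=
      fun x hx => ((hG x hx).continuousAt).continuousWithinAt
    have hganti : AntitoneOn g (Icc t₀ t₁) := by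
      apply antitoneOn_of_deriv_nonpos (convex_Icc t₀ t₁) hgcont
      · intro x hx
        rw [interior_Icc] at hx
        exact ((hG x (Ioo_subset_Icc_self hx)).differentiableAt).differentiableWithinAt
      · intro x hx
        rw [interior_Icc] at hx
        have hx' : x ∈ Icc t₀ t₁ := Ioo_subset_Icc_self hx
        rw [(hG x hx').deriv]
        have hxp : 0 < r x ^ a := Real.rpow_pos_of_pos (hrpos x hx') a
        have h1 : deriv r x ≤ -b / (2 * r x ^ a) := derivneg x hx'
        have hsimp : a + 1 - 1 = a := by ring
        rw [hsimp]
        have h2 : deriv r x * (a + 1) * r x ^ a ≤ (-b / (2 * r x ^ a)) * (a + 1) * r x ^ a := by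
          have : 0 < (a + 1) * r x ^ a := by positivity
          nlinarith
        have h3 : (-b / (2 * r x ^ a)) * (a + 1) * r x ^ a = -(b / 2 * (a + 1)) := by
          field_simp
        linarith [h3 ▸ h2]
    intro t htm
    have := hganti (left_mem_Icc.mpr ht) htm htm.1
    simp only [hg] at this
    linarith
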